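/- arXiv:1703.03983 — 3 statements merged into one kernel-verified Lean document; each statement's English description precedes it below -/
import Mathlib

section
/- Let m and n be positive integers with n dividing m, and let a, b, c, d be integers such that ad - bc ≡ 1 (mod n) and such that the map (x,y) ↦ (ax+by, cx+dy) defines a group automorphism of (ℤ/mℤ) ⊕ (ℤ/nℤ) (where the first coordinate of a pair acts mod m and the second mod n). Then there exists a matrix [[a',b'],[c',d']] in SL(2,ℤ) with a' ≡ a (mod m), b' ≡ b (mod m), c' ≡ c (mod n), and d' ≡ d (mod n). -/
open Finset

lemma exists_coprime_aux (a b d : ℤ) (ha : a ≠ 0)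
    (h : ∀ p : ℕ, p.Prime → (p:ℤ) ∣ a → (p:ℤ) ∣ b → ¬ (p:ℤ) ∣ d) :
    ∃ k : ℤ, IsCoprime (b + k * d) a := by
  classical
  set S := a.natAbs.primeFactors.filter (fun p : ℕ => ¬ ((p : ℕ) : ℤ) ∣ b) with hS
  refine ⟨∏ p ∈ S, (p:ℤ), ?_⟩
  rw [Int.isCoprime_iff_gcd_eq_one]
  by_contra hg
  obtain ⟨p, pp, hpg⟩ := Nat.exists_prime_and_dvd hg
  have hpa : (p:ℤ) ∣ a :=
    dvd_trans (Int.natCast_dvd_natCast.mpr hpg) (Int.gcd_dvd_right _ _)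
  have hpbk : (p:ℤ) ∣ b + (∏ q ∈ S, (q:ℤ)) * d :=
    dvd_trans (Int.natCast_dvd_natCast.mpr hpg) (Int.gcd_dvd_left _ _)
  have pZ : Prime (p:ℤ) := Nat.prime_iff_prime_int.mp pp
  by_cases hpb : (p:ℤ) ∣ b
  · have hkd : (p:ℤ) ∣ (∏ q ∈ S, (q:ℤ)) * d := (dvd_add_right hpb).mp hpbk
    rcases pZ.dvd_mul.mp hkd with hk | hd
    · obtain ⟨q, hqS, hpq⟩ := pZ.exists_mem_finset_dvd hk
      have hq : q.Prime := (Nat.mem_primeFactors.mp (mem_filter.mp hqS).1).1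
      have hpeq : p = q :=
        (Nat.prime_dvd_prime_iff_eq pp hq).mp (Int.natCast_dvd_natCast.mp hpq)
      exact (mem_filter.mp hqS).2 (hpeq ▸ hpb)
    · exact h p pp hpa hpb hd
  · have hpS : p ∈ S := by
      refine mem_filter.mpr ⟨Nat.mem_primeFactors.mpr ⟨pp, ?_, Int.natAbs_ne_zero.mpr ha⟩, hpb⟩
      exact Int.natCast_dvd_natCast.mp (Int.dvd_natAbs.mpr hpa)
    have hk : (p:ℤ) ∣ ∏ q ∈ S, (q:ℤ) := Finset.dvd_prod_of_mem _ hpS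
    have : (p:ℤ) ∣ b := by
      have := dvd_sub hpbk (hk.mul_right d)
      simpa using this
    exact hpb this

/-- Lifting a special automorphism of `(ℤ/mℤ) ⊕ (ℤ/nℤ)` to a matrix in `SL(2,ℤ)`
satisfying the stated congruences. -/
theorem stmt0 (m n : ℕ) (hm : 0 < m) (hn : 0 < n) (hnm : n ∣ m)
    (a b c d : ℤ) (hdet : a * d - b * c ≡ 1 [ZMOD n])
    (φ : (ZMod m × ZMod n) ≃+ (ZMod m × ZMod n))
    (hφ1 : φ (1, 0) = ((a : ZMod m), (c : ZMod n)))
    (hφ2 : φ (0, 1) = ((b : ZMod m), (d : ZMod n))) :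
    ∃ a' b' c' d' : ℤ, a' * d' - b' * c' = 1 ∧
      a' ≡ a [ZMOD m] ∧ b' ≡ b [ZMOD m] ∧ c' ≡ c [ZMOD n] ∧ d' ≡ d [ZMOD n] := by
  haveI : NeZero m := ⟨hm.ne'⟩
  haveI : NeZero n := ⟨hn.ne'⟩
  -- general formula for φ on integer casts
  have hφgen : ∀ x y : ℤ, φ ((x : ZMod m), (y : ZMod n)) =
      (((x*a + y*b : ℤ) : ZMod m), ((x*c + y*d : ℤ) : ZMod n)) := by
    intro x y
    have harg : ((x : ZMod m), (y : ZMod n)) =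
        x • (((1:ZMod m), (0:ZMod n)) : ZMod m × ZMod n) +
        y • (((0:ZMod m), (1:ZMod n)) : ZMod m × ZMod n) := by
      simp [Prod.ext_iff, Prod.smul_def, zsmul_eq_mul]
    rw [harg, map_add, map_zsmul, map_zsmul, hφ1, hφ2]
    simp only [Prod.ext_iff, Prod.smul_def, Prod.fst_add, Prod.snd_add, zsmul_eq_mul]
    constructor <;> push_cast <;> ring
  -- Step A: p*a + q*b ≡ 1 mod m
  set z := φ.symm (1, 0) with hzdef
  set p : ℤ := (z.1.val : ℤ) with hp
  set q : ℤ := (z.2.val : ℤ) with hq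
  have hz : φ ((p : ZMod m), (q : ZMod n)) = (1, 0) := by
    have h1 : ((p : ZMod m), (q : ZMod n)) = z := by
      simp [hp, hq, Prod.ext_iff, ZMod.natCast_val, ZMod.intCast_cast]
    rw [h1, hzdef, φ.apply_symm_apply]
  have hA : p * a + q * b ≡ 1 [ZMOD m] := by
    rw [hφgen p q] at hz
    have := congrArg Prod.fst hz
    simp only at this
    rw [show ((1 : ZMod m)) = ((1:ℤ) : ZMod m) by norm_cast] at this
    exact (ZMod.intCast_eq_intCast_iff _ _ _).mp this
  obtain ⟨k, hk⟩ : (m:ℤ) ∣ (p*a + q*b) - 1 := hA.symm.dvd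
  obtain ⟨s, hs⟩ : (n:ℤ) ∣ 1 - (a*d - b*c) := hdet.dvd
  -- make first entry nonzero
  set t₀ : ℤ := if a = 0 then 1 else 0 with ht₀
  set A : ℤ := a + m * t₀ with hAdef
  have hA0 : A ≠ 0 := by
    rcases eq_or_ne a 0 with h0 | h0
    · simp only [hAdef, ht₀, h0, if_pos rfl]
      simpa using (by exact_mod_cast hm.ne' : (m:ℤ) ≠ 0)
    · simp only [hAdef, ht₀, if_neg h0]
      simpa using h0
  set c₁ : ℤ := c - n*q*s with hc₁
  set d₁ : ℤ := d + n*p*s with hd₁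
  have hdet1 : A*d₁ - b*c₁ - 1 = (m:ℤ) * (n*s*k + t₀*d₁) := by
    have hk' : p*a + q*b - 1 = (m:ℤ)*k := hk
    have hs' : 1 - (a*d - b*c) = (n:ℤ)*s := hs
    simp only [hAdef, hc₁, hd₁]
    linear_combination (-1 : ℤ) * hs' + (n*s) * hk'
  -- coprimality hypothesis for the aux lemma
  have htriple : ∀ r : ℕ, r.Prime → (r:ℤ) ∣ A → (r:ℤ) ∣ b → ¬ (r:ℤ) ∣ (m:ℤ) := by
    intro r hr hrA hrb hrm
    have hra : (r:ℤ) ∣ a := by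
      have := dvd_sub hrA (hrm.mul_right t₀)
      simpa [hAdef] using this
    have h1 : (r:ℤ) ∣ p*a + q*b := dvd_add (hra.mul_left p) (hrb.mul_left q)
    have h2 : (r:ℤ) ∣ p*a + q*b - 1 := hk ▸ hrm.mul_right k
    have h3 : (r:ℤ) ∣ 1 := by
      have := dvd_sub h1 h2
      simpa using this
    have : r ∣ 1 := by exact_mod_cast h3
    exact Nat.Prime.one_lt hr |>.ne' (Nat.dvd_one.mp this)
  obtain ⟨t, ht⟩ := exists_coprime_aux A b (m:ℤ) hA0 htriple
  set B : ℤ := b + t * m with hB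
  obtain ⟨u, v, huv⟩ := ht
  -- huv : u * B + v * A = 1
  have hdetB : A*d₁ - B*c₁ - 1 = (m:ℤ) * (n*s*k + t₀*d₁ - t*c₁) := by
    simp only [hB]
    linear_combination hdet1
  -- key divisibility
  have hR : A*(d₁ - v) - B*(c₁ + u) = (m:ℤ) * (n*s*k + t₀*d₁ - t*c₁) := by
    linear_combination hdetB - huv
  set w : ℤ := v*(c₁ + u) + u*(d₁ - v) with hw
  refine ⟨A, B, -u + w*A, v + w*B, ?_, ?_, ?_, ?_, ?_⟩
  · linear_combination huv
  · -- A ≡ a [ZMOD m]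
    have : (m:ℤ) ∣ a - A := ⟨-t₀, by rw [hAdef]; ring⟩
    exact (Int.modEq_iff_dvd.mpr this)
  · have : (m:ℤ) ∣ b - B := ⟨-t, by rw [hB]; ring⟩
    exact (Int.modEq_iff_dvd.mpr this)
  · -- c' ≡ c [ZMOD n]
    have h1 : (m:ℤ) ∣ c₁ - (-u + w*A) := by
      refine ⟨-(u * (n*s*k + t₀*d₁ - t*c₁)), ?_⟩
      simp only [hw]
      linear_combination (-(c₁ + u)) * huv + (-u) * hR
    have h2 : (n:ℤ) ∣ c₁ - (-u + w*A) :=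
      dvd_trans (Int.natCast_dvd_natCast.mpr hnm) h1
    have h3 : (n:ℤ) ∣ c - c₁ := ⟨q*s, by rw [hc₁]; ring⟩
    have : (n:ℤ) ∣ c - (-u + w*A) := by
      have := dvd_add h3 h2
      simpa using this
    exact Int.modEq_iff_dvd.mpr this
  · have h1 : (m:ℤ) ∣ d₁ - (v + w*B) := by
      refine ⟨v * (n*s*k + t₀*d₁ - t*c₁), ?_⟩
      simp only [hw]
      linear_combination (-(d₁ - v)) * huv + v * hR
    have h2 : (n:ℤ) ∣ d₁ - (v + w*B) :=
      dvd_trans (Int.natCast_dvd_natCast.mpr hnm) h1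
    have h3 : (n:ℤ) ∣ d - d₁ := ⟨-p*s, by rw [hd₁]; ring⟩
    have : (n:ℤ) ∣ d - (v + w*B) := by
      have := dvd_add h3 h2
      simpa using this
    exact Int.modEq_iff_dvd.mpr this
end

section
/- Let m and n be positive integers with n | m, and let φ be an automorphism of A = (ℤ/mℤ) ⊕ (ℤ/nℤ) with φ(1,0) = a·(1,0) + c·(0,1) and φ(0,1) = b·(1,0) + d·(0,1) for integers a,b,c,d. If p is a prime dividing both a and b, then p does not divide m. -/
/-- If `φ` is an automorphism of `(ℤ/mℤ) ⊕ (ℤ/nℤ)` with `φ(1,0) = a(1,0)+c(0,1)` and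
`φ(0,1) = b(1,0)+d(0,1)`, and a prime `p` divides both `a` and `b`, then `p ∤ m`. -/
theorem stmt1 (m n : ℕ) (hm : 0 < m) (hn : 0 < n) (hnm : n ∣ m)
    (a b c d : ℤ)
    (φ : (ZMod m × ZMod n) ≃+ (ZMod m × ZMod n))
    (hφ1 : φ (1, 0) = ((a : ZMod m), (c : ZMod n)))
    (hφ2 : φ (0, 1) = ((b : ZMod m), (d : ZMod n)))
    (p : ℕ) (hp : p.Prime) (hpa : (p : ℤ) ∣ a) (hpb : (p : ℤ) ∣ b) :
    ¬ (p ∣ m) := by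
  intro hpm
  haveI : NeZero m := ⟨hm.ne'⟩
  haveI : NeZero n := ⟨hn.ne'⟩
  obtain ⟨⟨x, y⟩, hz⟩ := φ.surjective ((1 : ZMod m), (0 : ZMod n))
  have hdecomp : ((x, y) : ZMod m × ZMod n)
      = x.val • ((1 : ZMod m), (0 : ZMod n)) + y.val • ((0 : ZMod m), (1 : ZMod n)) := by
    ext <;> simp [nsmul_eq_mul, ZMod.natCast_val, ZMod.cast_id]
  rw [hdecomp, map_add, map_nsmul, map_nsmul, hφ1, hφ2] at hz
  have h1 : (x.val : ZMod m) * a + (y.val : ZMod m) * b = 1 := by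
    have := congrArg Prod.fst hz
    simpa [nsmul_eq_mul] using this
  have h2 : ((x.val * a + y.val * b - 1 : ℤ) : ZMod m) = 0 := by
    push_cast
    rw [h1]; ring
  have h3 : (m : ℤ) ∣ (x.val * a + y.val * b - 1 : ℤ) :=
    (ZMod.intCast_zmod_eq_zero_iff_dvd _ _).mp h2
  have hp1 : (p : ℤ) ∣ 1 := by
    have hpm' : (p : ℤ) ∣ (m : ℤ) := Int.natCast_dvd_natCast.mpr hpm
    have : (p : ℤ) ∣ (x.val * a + y.val * b) - (x.val * a + y.val * b - 1) :=
      dvd_sub (dvd_add (Dvd.dvd.mul_left hpa _) (Dvd.dvd.mul_left hpb _))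
        (hpm'.trans h3)
    simpa using this
  have : p ≤ 1 := by exact_mod_cast Int.le_of_dvd one_pos hp1
  have := hp.two_le
  omega
end

section
/- Let G be a group, H ≤ G a subgroup, and suppose a set S carries commuting left and right G-actions such that there is an element s₀ ∈ S with: the left stabilizer of the right orbit s₀·G is contained in finitely many left H-cosets (indeed [G : H] < ∞), and for every h ∈ H there exists g ∈ G with h·s₀ = s₀·g. Then the set of right G-orbits in G·s₀·G is finite, of cardinality at most [G : H]. -/
/-- Abstract form of finiteness of right orbits in a biset: if `H ≤ G` has finite index,
`S` carries commuting left and right `G`-actions, and every `h ∈ H` satisfies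
`h·s₀ = s₀·g` for some `g`, then the right `G`-orbits in `G·s₀·G` are covered by at most
`[G : H]` orbit representatives. -/
theorem stmt17 {G : Type*} [Group G] {S : Type*}
    (l r : G → S → S)
    (hl1 : ∀ s, l 1 s = s) (hlm : ∀ g g' s, l (g * g') s = l g (l g' s))
    (hr1 : ∀ s, r 1 s = s) (hrm : ∀ g g' s, r (g * g') s = r g' (r g s))
    (hcomm : ∀ g h s, l g (r h s) = r h (l g s))
    (H : Subgroup G) (hHfin : H.FiniteIndex)
    (s₀ : S)
    (hlift : ∀ h ∈ H, ∃ g : G, l h s₀ = r g s₀) :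
    ∃ T : Finset S, T.card ≤ H.index ∧
      ∀ g g' : G, ∃ t ∈ T, ∃ k : G, l g (r g' s₀) = r k t := by
  classical
  haveI : Finite (G ⧸ H) := H.finite_quotient_of_finiteIndex
  haveI : Fintype (G ⧸ H) := Fintype.ofFinite _
  refine ⟨Finset.univ.image (fun q : G ⧸ H => l q.out s₀), ?_, ?_⟩
  · calc (Finset.univ.image (fun q : G ⧸ H => l q.out s₀)).card
        ≤ (Finset.univ : Finset (G ⧸ H)).card := Finset.card_image_le
      _ = H.index := by
          rw [Finset.card_univ, Subgroup.index, Nat.card_eq_fintype_card]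
  · intro g g'
    set ψ : G := (QuotientGroup.mk g : G ⧸ H).out
    have hψ : ψ⁻¹ * g ∈ H := by
      rw [← QuotientGroup.eq]
      exact QuotientGroup.out_eq' _
    obtain ⟨gg, hgg⟩ := hlift _ hψ
    refine ⟨l ψ s₀, Finset.mem_image.mpr ⟨QuotientGroup.mk g, Finset.mem_univ _, rfl⟩,
      gg * g', ?_⟩
    have hg : g = ψ * (ψ⁻¹ * g) := by group
    calc l g (r g' s₀) = l ψ (l (ψ⁻¹ * g) (r g' s₀)) := by rw [← hlm, ← hg]
      _ = l ψ (r g' (l (ψ⁻¹ * g) s₀)) := by rw [hcomm]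
      _ = l ψ (r g' (r gg s₀)) := by rw [hgg]
      _ = l ψ (r (gg * g') s₀) := by rw [hrm]
      _ = r (gg * g') (l ψ s₀) := hcomm _ _ _
end
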